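/- arXiv:2512.15546 — 3 statements merged into one kernel-verified Lean document; each statement's English description precedes it below -/
import Mathlib

section
/- Let N be a positive integer, let h₀ ∈ ℂ, let h : Fin N → ℂ, and for each n let Θₙ ⊆ ℂ be a nonempty finite set. Then the supremum of |h₀ + ∑ₙ wₙ · hₙ| over all choices with wₙ ∈ {t · w : t ∈ [0,1], w ∈ Θₙ} equals the maximum of |h₀ + ∑ₙ wₙ · hₙ| over all choices with wₙ ∈ {0} ∪ Θₙ. -/
open Set

lemma convex_abs_aux (c d : ℂ) (t : ℝ) (ht0 : 0 ≤ t) (ht1 : t ≤ 1) :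
    ‖c + t • d‖ ≤ max ‖c‖ ‖c + d‖ := by
  have hdecomp : c + t • d = (1 - t) • c + t • (c + d) := by
    simp [Complex.real_smul]; push_cast; ring
  rw [hdecomp]
  calc ‖(1 - t) • c + t • (c + d)‖
      ≤ ‖(1 - t) • c‖ + ‖t • (c + d)‖ := norm_add_le _ _
    _ = (1 - t) * ‖c‖ + t * ‖c + d‖ := by
        rw [norm_smul, norm_smul, Real.norm_eq_abs,
          Real.norm_eq_abs, abs_of_nonneg (by linarith), abs_of_nonneg ht0]
    _ ≤ (1 - t) * max ‖c‖ ‖c + d‖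
        + t * max ‖c‖ ‖c + d‖ := by
        gcongr
        · exact le_max_left _ _
        · exact le_max_right _ _
    _ = max ‖c‖ ‖c + d‖ := by ring

theorem stmt_5 (N : ℕ) (hN : 0 < N) (h₀ : ℂ) (h : Fin N → ℂ) (Θ : Fin N → Set ℂ)
    (hne : ∀ n, (Θ n).Nonempty) (hfin : ∀ n, (Θ n).Finite) :
    sSup ((fun w : Fin N → ℂ => ‖h₀ + ∑ n, w n * h n‖) ''
        {w | ∀ n, w n ∈ {z : ℂ | ∃ t ∈ Set.Icc (0 : ℝ) 1, ∃ v ∈ Θ n, z = t • v}}) =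
      sSup ((fun w : Fin N → ℂ => ‖h₀ + ∑ n, w n * h n‖) ''
        {w | ∀ n, w n ∈ ({0} ∪ Θ n : Set ℂ)}) := by
  set f : (Fin N → ℂ) → ℝ := fun w => ‖h₀ + ∑ n, w n * h n‖ with hf
  set C : Fin N → Set ℂ := fun n => {z : ℂ | ∃ t ∈ Set.Icc (0 : ℝ) 1, ∃ v ∈ Θ n, z = t • v}
    with hC
  set D : Fin N → Set ℂ := fun n => ({0} ∪ Θ n : Set ℂ) with hD
  have hDfin : ({w : Fin N → ℂ | ∀ n, w n ∈ D n}).Finite := by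
    refine (Set.Finite.pi (fun n => (Set.finite_singleton (0:ℂ)).union (hfin n))).subset ?_
    intro w hw
    rw [Set.mem_univ_pi]
    exact hw
  have hDne : ({w : Fin N → ℂ | ∀ n, w n ∈ D n}).Nonempty :=
    ⟨fun _ => 0, fun n => Or.inl rfl⟩
  have hDimfin : (f '' {w : Fin N → ℂ | ∀ n, w n ∈ D n}).Finite := hDfin.image f
  have hDbdd : BddAbove (f '' {w : Fin N → ℂ | ∀ n, w n ∈ D n}) := hDimfin.bddAbove
  set M : ℝ := sSup (f '' {w : Fin N → ℂ | ∀ n, w n ∈ D n}) with hM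
  -- key lemma
  have key : ∀ S : Finset (Fin N), ∀ w : Fin N → ℂ,
      (∀ n, n ∉ S → w n ∈ D n) → (∀ n ∈ S, w n ∈ C n) → f w ≤ M := by
    intro S
    induction S using Finset.induction_on with
    | empty =>
      intro w hw _
      exact le_csSup hDbdd ⟨w, fun n => hw n (by simp), rfl⟩
    | @insert a S ha IH =>
      intro w hw hC'
      obtain ⟨t, ht, v, hv, hwa⟩ := hC' a (Finset.mem_insert_self a S)
      have hsum : ∀ z : ℂ, ∑ n, Function.update w a z n * h n
          = z * h a + ∑ n ∈ Finset.univ.erase a, w n * h n := by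
        intro z
        rw [← Finset.add_sum_erase Finset.univ (fun n => Function.update w a z n * h n)
          (Finset.mem_univ a)]
        simp only [Function.update_self]
        congr 1
        refine Finset.sum_congr rfl (fun n hn => ?_)
        rw [Function.update_of_ne (Finset.ne_of_mem_erase hn)]
      have hsumw : ∑ n, w n * h n = (t • v) * h a + ∑ n ∈ Finset.univ.erase a, w n * h n := by
        conv_lhs => rw [← Finset.add_sum_erase Finset.univ (fun n => w n * h n)
          (Finset.mem_univ a)]
        rw [hwa]
      set c : ℂ := h₀ + ∑ n ∈ Finset.univ.erase a, w n * h n with hc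
      have hstep : f w ≤ max (f (Function.update w a 0)) (f (Function.update w a v)) := by
        have h0 : f (Function.update w a 0) = ‖c‖ := by
          simp only [hf, hsum 0, hc]; ring_nf
        have h1 : f (Function.update w a v) = ‖c + v * h a‖ := by
          simp only [hf, hsum v, hc]; ring_nf
        have hw' : f w = ‖c + t • (v * h a)‖ := by
          simp only [hf, hsumw, hc, smul_mul_assoc]; ring_nf
        rw [h0, h1, hw']
        exact convex_abs_aux c (v * h a) t ht.1 ht.2
      have good : ∀ z : ℂ, z ∈ D a → f (Function.update w a z) ≤ M := by
        intro z hz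
        refine IH (Function.update w a z) ?_ ?_
        · intro n hn
          rcases eq_or_ne n a with rfl | hna
          · rwa [Function.update_self]
          · rw [Function.update_of_ne hna]
            exact hw n (by simp [hna, hn])
        · intro n hn
          have hna : n ≠ a := fun hh => ha (hh ▸ hn)
          rw [Function.update_of_ne hna]
          exact hC' n (Finset.mem_insert_of_mem hn)
      refine hstep.trans (max_le ?_ ?_)
      · exact good 0 (Or.inl rfl)
      · exact good v (Or.inr hv)
  have hCne : ({w : Fin N → ℂ | ∀ n, w n ∈ C n}).Nonempty := by
    refine ⟨fun n => (hne n).some, fun n => ⟨1, ⟨zero_le_one, le_refl 1⟩,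
      (hne n).some, (hne n).some_mem, by simp⟩⟩
  apply le_antisymm
  · refine csSup_le (hCne.image f) ?_
    rintro x ⟨w, hw, rfl⟩
    exact key Finset.univ w (fun n hn => absurd (Finset.mem_univ n) hn)
      (fun n _ => hw n)
  · refine csSup_le_csSup ?_ (hDne.image f) ?_
    · refine ⟨M, ?_⟩
      rintro x ⟨w, hw, rfl⟩
      exact key Finset.univ w (fun n hn => absurd (Finset.mem_univ n) hn) (fun n _ => hw n)
    · refine Set.image_mono ?_
      intro w hw n
      rcases hw n with h0 | hv
      · exact ⟨0, ⟨le_refl 0, zero_le_one⟩, (hne n).some, (hne n).some_mem, by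
          simp [Set.mem_singleton_iff.mp h0]⟩
      · exact ⟨1, ⟨zero_le_one, le_refl 1⟩, w n, hv, by simp⟩
end

section
/- Let N be a positive integer, let h : Fin N → ℂ, and for each n let Θₙ ⊆ ℂ be a nonempty finite set. Then the maximum over all choices (w₁,…,w_N) with wₙ ∈ Θₙ of |∑ₙ wₙ · hₙ| equals the supremum over θ ∈ [0, 2π] of ∑ₙ (max over z ∈ hₙ • Θₙ of Re(e^{-iθ} · z)). -/
open Set Pointwise

theorem stmt_7 (N : ℕ) (hN : 0 < N) (h : Fin N → ℂ) (Θ : Fin N → Set ℂ)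
    (hne : ∀ n, (Θ n).Nonempty) (hfin : ∀ n, (Θ n).Finite) :
    sSup ((fun w : Fin N → ℂ => ‖∑ n, w n * h n‖) ''
        {w | ∀ n, w n ∈ Θ n}) =
      sSup ((fun θ : ℝ =>
          ∑ n, sSup ((fun z : ℂ => (Complex.exp (-(θ : ℂ) * Complex.I) * z).re) ''
            (h n • Θ n))) '' Set.Icc 0 (2 * Real.pi)) := by
  classical
  have hSfin : ({w : Fin N → ℂ | ∀ n, w n ∈ Θ n}).Finite := by
    have : ({w : Fin N → ℂ | ∀ n, w n ∈ Θ n}) = Set.pi Set.univ Θ := by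
      ext w; simp [Set.mem_pi]
    rw [this]; exact Set.Finite.pi hfin
  have hSne : ({w : Fin N → ℂ | ∀ n, w n ∈ Θ n}).Nonempty :=
    ⟨fun n => (hne n).some, fun n => (hne n).some_mem⟩
  have hAfin : ∀ (θ : ℝ) (n : Fin N),
      ((fun z : ℂ => (Complex.exp (-(θ : ℂ) * Complex.I) * z).re) '' (h n • Θ n)).Finite :=
    fun θ n => ((hfin n).smul_set).image _
  have hAne : ∀ (θ : ℝ) (n : Fin N),
      ((fun z : ℂ => (Complex.exp (-(θ : ℂ) * Complex.I) * z).re) '' (h n • Θ n)).Nonempty :=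
    fun θ n => ((hne n).smul_set).image _
  have habs : ∀ (θ : ℝ) (z : ℂ),
      (Complex.exp (-(θ : ℂ) * Complex.I) * z).re ≤ ‖z‖ := by
    intro θ z
    calc (Complex.exp (-(θ : ℂ) * Complex.I) * z).re
        ≤ ‖Complex.exp (-(θ : ℂ) * Complex.I) * z‖ := Complex.re_le_norm _
      _ = ‖z‖ := by
          rw [norm_mul, Complex.norm_exp]; simp
  have hAle : ∀ (θ : ℝ) (n : Fin N),
      sSup ((fun z : ℂ => (Complex.exp (-(θ : ℂ) * Complex.I) * z).re) '' (h n • Θ n))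
        ≤ sSup ((fun z : ℂ => ‖z‖) '' (h n • Θ n)) := by
    intro θ n
    apply csSup_le (hAne θ n)
    rintro x ⟨z, hz, rfl⟩
    exact le_trans (habs θ z)
      (le_csSup (((hfin n).smul_set).image _).bddAbove ⟨z, hz, rfl⟩)
  have hRbdd : BddAbove ((fun θ : ℝ =>
      ∑ n, sSup ((fun z : ℂ => (Complex.exp (-(θ : ℂ) * Complex.I) * z).re) ''
        (h n • Θ n))) '' Set.Icc 0 (2 * Real.pi)) := by
    refine ⟨∑ n, sSup ((fun z : ℂ => ‖z‖) '' (h n • Θ n)), ?_⟩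
    rintro x ⟨θ, hθ, rfl⟩
    exact Finset.sum_le_sum fun n _ => hAle θ n
  apply le_antisymm
  · apply csSup_le (hSne.image _)
    rintro x ⟨w, hw, rfl⟩
    set v : ℂ := ∑ n, w n * h n with hv
    set θ₀ : ℝ := if Complex.arg v < 0 then Complex.arg v + 2 * Real.pi else Complex.arg v
      with hθ₀
    have hθ₀mem : θ₀ ∈ Set.Icc 0 (2 * Real.pi) := by
      rw [hθ₀]
      split_ifs with hlt
      · constructor
        · nlinarith [Complex.neg_pi_lt_arg v, Real.pi_pos]
        · nlinarith [Complex.arg_le_pi v, Real.pi_pos]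
      · constructor
        · linarith
        · nlinarith [Complex.arg_le_pi v, Real.pi_pos]
    have hexp : Complex.exp (-(θ₀ : ℂ) * Complex.I)
        = Complex.exp (-(Complex.arg v : ℂ) * Complex.I) := by
      rw [hθ₀]
      split_ifs with hlt
      · push_cast
        rw [show (-(↑(Complex.arg v) + 2 * ↑Real.pi) * Complex.I)
            = -(Complex.arg v : ℂ) * Complex.I + (-(2 * ↑Real.pi * Complex.I)) by ring,
          Complex.exp_add]
        rw [Complex.exp_neg, Complex.exp_two_pi_mul_I]
        simp
      · rfl
    have hkey2 : Complex.exp (-(Complex.arg v : ℂ) * Complex.I) * v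
        = (‖v‖ : ℂ) := by
      calc Complex.exp (-(Complex.arg v : ℂ) * Complex.I) * v
          = Complex.exp (-(Complex.arg v : ℂ) * Complex.I) *
            ((‖v‖ : ℂ) * Complex.exp ((Complex.arg v : ℂ) * Complex.I)) := by
            rw [Complex.norm_mul_exp_arg_mul_I]
        _ = (‖v‖ : ℂ) * Complex.exp (-(Complex.arg v : ℂ) * Complex.I
              + (Complex.arg v : ℂ) * Complex.I) := by rw [Complex.exp_add]; ring
        _ = (‖v‖ : ℂ) := by
            rw [show -(Complex.arg v : ℂ) * Complex.I + (Complex.arg v : ℂ) * Complex.I = 0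
              by ring]
            simp
    have hkey : ‖v‖ = (Complex.exp (-(θ₀ : ℂ) * Complex.I) * v).re := by
      rw [hexp, hkey2]; simp
    show ‖v‖ ≤ _
    rw [hkey]
    have hsum : (Complex.exp (-(θ₀ : ℂ) * Complex.I) * v).re
        = ∑ n, (Complex.exp (-(θ₀ : ℂ) * Complex.I) * (w n * h n)).re := by
      rw [hv, Finset.mul_sum, Complex.re_sum]
    rw [hsum]
    refine le_trans (Finset.sum_le_sum fun n _ => ?_)
      (le_csSup hRbdd ⟨θ₀, hθ₀mem, rfl⟩)
    refine le_csSup (hAfin θ₀ n).bddAbove ⟨w n * h n, ?_, rfl⟩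
    rw [show w n * h n = h n • w n by rw [smul_eq_mul]; ring]
    exact Set.smul_mem_smul_set (hw n)
  · apply csSup_le ((Set.nonempty_Icc.mpr (by positivity)).image _)
    rintro x ⟨θ, hθ, rfl⟩
    have hmem : ∀ n : Fin N, ∃ u, u ∈ Θ n ∧
        (Complex.exp (-(θ : ℂ) * Complex.I) * (u * h n)).re
          = sSup ((fun z : ℂ => (Complex.exp (-(θ : ℂ) * Complex.I) * z).re) ''
              (h n • Θ n)) := by
      intro n
      obtain ⟨z, hz, hz2⟩ := (hAne θ n).csSup_mem (hAfin θ n)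
      obtain ⟨u, hu, rfl⟩ := hz
      simp only [smul_eq_mul] at hz2
      exact ⟨u, hu, by rw [mul_comm u (h n)]; exact hz2⟩
    choose u hu hequ using hmem
    have : ∑ n, sSup ((fun z : ℂ => (Complex.exp (-(θ : ℂ) * Complex.I) * z).re) ''
        (h n • Θ n)) = (Complex.exp (-(θ : ℂ) * Complex.I) * ∑ n, u n * h n).re := by
      rw [Finset.mul_sum, Complex.re_sum]
      exact Finset.sum_congr rfl fun n _ => (hequ n).symm
    show (∑ n, sSup ((fun z : ℂ => (Complex.exp (-(θ : ℂ) * Complex.I) * z).re) ''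
        (h n • Θ n))) ≤ _
    rw [this]
    exact le_trans (habs θ _)
      (le_csSup (hSfin.image _).bddAbove ⟨u, fun n => hu n, rfl⟩)
end

section
/- Let S, T ⊆ ℂ be nonempty finite sets. Then the number of extreme points of the convex polygon convexHull ℝ S + convexHull ℝ T is at most |S| + |T|. -/
open Set Pointwise Filter

namespace Stmt11Aux

/-- The linear functional with "slope" t and vertical sign ε. -/
noncomputable def φ (ε t : ℝ) (z : ℂ) : ℝ := t * z.re + ε * z.im

/-- Slopes t for which `a` is the unique maximizer of `φ ε t` over `A`. -/
def Iv (ε : ℝ) (A : Set ℂ) (a : ℂ) : Set ℝ :=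
  {t | ∀ x ∈ A, x ≠ a → φ ε t x < φ ε t a}

theorem φ_add (ε t : ℝ) (x y : ℂ) : φ ε t (x + y) = φ ε t x + φ ε t y := by
  simp [φ]; ring

theorem Iv_ordConnected (ε : ℝ) (A : Set ℂ) (a : ℂ) : (Iv ε A a).OrdConnected := by
  constructor
  intro t₁ h₁ t₂ h₂ t ht x hx hxa
  have u₁ := h₁ x hx hxa
  have u₂ := h₂ x hx hxa
  simp only [φ] at u₁ u₂ ⊢
  rcases le_total x.re a.re with h | h
  · have : t * (x.re - a.re) ≤ t₁ * (x.re - a.re) :=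
      mul_le_mul_of_nonpos_right ht.1 (by linarith)
    nlinarith
  · have : t * (x.re - a.re) ≤ t₂ * (x.re - a.re) :=
      mul_le_mul_of_nonneg_right ht.2 (by linarith)
    nlinarith

theorem Iv_isOpen {A : Set ℂ} (hA : A.Finite) (ε : ℝ) (a : ℂ) : IsOpen (Iv ε A a) := by
  have : Iv ε A a = ⋂ x ∈ A, {t | x ≠ a → φ ε t x < φ ε t a} := by
    ext t; simp [Iv]
  rw [this]
  refine hA.isOpen_biInter fun x _ => ?_
  rcases eq_or_ne x a with rfl | hxa
  · convert isOpen_univ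
    ext t; simp
  · have h2 : {t | x ≠ a → φ ε t x < φ ε t a} = {t | φ ε t x < φ ε t a} := by
      ext t; simp [hxa]
    rw [h2]
    exact isOpen_lt (by unfold φ; fun_prop) (by unfold φ; fun_prop)

theorem Iv_disjoint {A : Set ℂ} {a b : ℂ} (ha : a ∈ A) (hb : b ∈ A) (hab : a ≠ b)
    {t : ℝ} (hta : t ∈ Iv ε A a) (htb : t ∈ Iv ε A b) : False := by
  have h1 := hta b hb (Ne.symm hab)
  have h2 := htb a ha hab
  linarith

/-- Supremum of a set of reals, in the extended reals. -/
noncomputable def esup (s : Set ℝ) : EReal := sSup (Real.toEReal '' s)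

theorem esup_mono {s t : Set ℝ} (h : s ⊆ t) : esup s ≤ esup t :=
  sSup_le_sSup (image_mono (f := Real.toEReal) h)

theorem esup_le_coe {s : Set ℝ} {y : ℝ} (h : ∀ z ∈ s, z ≤ y) : esup s ≤ (y : EReal) := by
  refine sSup_le ?_
  rintro _ ⟨z, hz, rfl⟩
  exact_mod_cast h z hz

theorem coe_le_esup {s : Set ℝ} {y : ℝ} (h : y ∈ s) : (y : EReal) ≤ esup s :=
  le_sSup ⟨y, h, rfl⟩

theorem exists_lt_of_lt_esup {s : Set ℝ} {b : EReal} (h : b < esup s) :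
    ∃ x ∈ s, b < (x : EReal) := by
  obtain ⟨_, ⟨x, hx, rfl⟩, hbx⟩ := lt_sSup_iff.1 h
  exact ⟨x, hx, hbx⟩

theorem esup_lt_aux {I J : Set ℝ} (hJ : IsOpen J) (hIc : I.OrdConnected)
    {x y : ℝ} (hx : x ∈ I) (hy : y ∈ J) (hxy : x < y)
    (hd : ∀ t, t ∈ I → t ∈ J → False) : esup I < esup J := by
  have hIy : ∀ z ∈ I, z ≤ y := by
    intro z hz
    by_contra hc
    push_neg at hc
    exact hd y (hIc.out hx hz ⟨hxy.le, hc.le⟩) hy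
  obtain ⟨δ, hδ, hball⟩ := Metric.isOpen_iff.1 hJ y hy
  have hy2 : y + δ / 2 ∈ J := by
    apply hball
    simp only [Metric.mem_ball, Real.dist_eq]
    rw [abs_of_nonneg (by linarith)]
    linarith
  calc esup I ≤ (y : EReal) := esup_le_coe hIy
    _ < ((y + δ / 2 : ℝ) : EReal) := by exact_mod_cast (by linarith : y < y + δ / 2)
    _ ≤ esup J := coe_le_esup hy2

theorem esup_ne {I J : Set ℝ} (hI : IsOpen I) (hJ : IsOpen J)
    (hIc : I.OrdConnected) (hJc : J.OrdConnected)
    (hIne : I.Nonempty) (hJne : J.Nonempty)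
    (hd : ∀ t, t ∈ I → t ∈ J → False) : esup I ≠ esup J := by
  obtain ⟨x, hx⟩ := hIne
  obtain ⟨y, hy⟩ := hJne
  rcases lt_trichotomy x y with h | h | h
  · exact ne_of_lt (esup_lt_aux hJ hIc hx hy h hd)
  · exact absurd (h ▸ hy) (fun hc => hd x hx hc)
  · exact ne_of_gt (esup_lt_aux hI hJc hy hx h (fun t a b => hd t b a))

theorem esup_inter {I J : Set ℝ} (hIc : I.OrdConnected) (hJc : J.OrdConnected)
    (hne : (I ∩ J).Nonempty) : esup (I ∩ J) = esup I ∨ esup (I ∩ J) = esup J := by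
  obtain ⟨t₀, ht₀⟩ := hne
  have le1 : esup (I ∩ J) ≤ esup I := esup_mono inter_subset_left
  have le2 : esup (I ∩ J) ≤ esup J := esup_mono inter_subset_right
  by_contra hc
  push_neg at hc
  obtain ⟨x, hx, hsx⟩ := exists_lt_of_lt_esup (lt_of_le_of_ne le1 hc.1)
  obtain ⟨y, hy, hsy⟩ := exists_lt_of_lt_esup (lt_of_le_of_ne le2 hc.2)
  have ht₀x : t₀ < x := by
    have : (t₀ : EReal) ≤ esup (I ∩ J) := coe_le_esup ht₀
    exact_mod_cast this.trans_lt hsx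
  have ht₀y : t₀ < y := by
    have : (t₀ : EReal) ≤ esup (I ∩ J) := coe_le_esup ht₀
    exact_mod_cast this.trans_lt hsy
  rcases le_total x y with h | h
  · have : x ∈ J := hJc.out ht₀.2 hy ⟨ht₀x.le, h⟩
    have : (x : EReal) ≤ esup (I ∩ J) := coe_le_esup ⟨hx, this⟩
    exact absurd hsx (not_lt.2 this)
  · have : y ∈ I := hIc.out ht₀.1 hx ⟨ht₀y.le, h⟩
    have : (y : EReal) ≤ esup (I ∩ J) := coe_le_esup ⟨this, hy⟩
    exact absurd hsy (not_lt.2 this)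

theorem decomp {S T : Set ℂ} {v : ℂ} (hv : v ∈ S + T) :
    ∃ a ∈ S, ∃ b ∈ T, a + b = v ∧ ∀ ε, Iv ε (S + T) v = Iv ε S a ∩ Iv ε T b := by
  rw [Set.mem_add] at hv
  obtain ⟨a, ha, b, hb, rfl⟩ := hv
  refine ⟨a, ha, b, hb, rfl, fun ε => ?_⟩
  ext t
  constructor
  · intro ht
    constructor
    · intro x hx hxa
      have hmem : x + b ∈ S + T := add_mem_add hx hb
      have hne : x + b ≠ a + b := by simpa using hxa
      have h := ht (x + b) hmem hne
      rw [φ_add, φ_add] at h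
      linarith
    · intro x hx hxb
      have hmem : a + x ∈ S + T := add_mem_add ha hx
      have hne : a + x ≠ a + b := by simpa using hxb
      have h := ht (a + x) hmem hne
      rw [φ_add, φ_add] at h
      linarith
  · rintro ⟨h1, h2⟩ y hy hyv
    rw [Set.mem_add] at hy
    obtain ⟨x, hx, w, hw, rfl⟩ := hy
    have hxa : φ ε t x ≤ φ ε t a := by
      rcases eq_or_ne x a with rfl | h
      · exact le_rfl
      · exact (h1 x hx h).le
    have hwb : φ ε t w ≤ φ ε t b := by
      rcases eq_or_ne w b with rfl | h
      · exact le_rfl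
      · exact (h2 w hw h).le
    have hor : x ≠ a ∨ w ≠ b := by
      by_contra hc
      push_neg at hc
      exact hyv (by rw [hc.1, hc.2])
    rw [φ_add, φ_add]
    rcases hor with h | h
    · have := h1 x hx h; linarith
    · have := h2 w hw h; linarith

/-- If `a` is the strict `re`-maximum, every slope interval is nonempty. -/
theorem Iv_nonempty_of_max {A : Set ℂ} (hA : A.Finite) {a : ℂ}
    (h : ∀ x ∈ A, x ≠ a → x.re < a.re) (ε : ℝ) : (Iv ε A a).Nonempty := by
  have hev : ∀ᶠ t in atTop, t ∈ Iv ε A a := by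
    have : ∀ᶠ t in atTop, ∀ x ∈ A, x ≠ a → φ ε t x < φ ε t a := by
      rw [eventually_all_finite hA]
      intro x hx
      rcases eq_or_ne x a with rfl | hxa
      · exact Eventually.of_forall fun t hne => absurd rfl hne
      · filter_upwards [eventually_gt_atTop ((ε * (x.im - a.im)) / (a.re - x.re))] with t htt
        intro _
        have hpos : 0 < a.re - x.re := by have := h x hx hxa; linarith
        have h2 := (div_lt_iff₀ hpos).1 htt
        simp only [φ]
        nlinarith
    exact this
  exact hev.exists

theorem Iv_nonempty_of_min {A : Set ℂ} (hA : A.Finite) {a : ℂ}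
    (h : ∀ x ∈ A, x ≠ a → a.re < x.re) (ε : ℝ) : (Iv ε A a).Nonempty := by
  have hev : ∀ᶠ t in atBot, t ∈ Iv ε A a := by
    have : ∀ᶠ t in atBot, ∀ x ∈ A, x ≠ a → φ ε t x < φ ε t a := by
      rw [eventually_all_finite hA]
      intro x hx
      rcases eq_or_ne x a with rfl | hxa
      · exact Eventually.of_forall fun t hne => absurd rfl hne
      · filter_upwards [eventually_lt_atBot ((ε * (x.im - a.im)) / (a.re - x.re))] with t htt
        intro _
        have hneg : a.re - x.re < 0 := by have := h x hx hxa; linarith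
        have h2 := (lt_div_iff_of_neg hneg).1 htt
        simp only [φ]
        nlinarith
    exact this
  exact hev.exists


/-- There is always a point whose slope interval has supremum `⊤`. -/
theorem exists_esup_top {A : Set ℂ} (hA : A.Finite) (hAne : A.Nonempty) {ε : ℝ} (hε : ε ≠ 0) :
    ∃ a ∈ A, (Iv ε A a).Nonempty ∧ esup (Iv ε A a) = ⊤ := by
  obtain ⟨a₁, ha₁, hmax⟩ := Set.exists_max_image A Complex.re hA hAne
  obtain ⟨a, ha, hmax2⟩ := Set.exists_max_image {x ∈ A | x.re = a₁.re} (fun z => ε * z.im)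
    (hA.subset (sep_subset _ _)) ⟨a₁, ha₁, rfl⟩
  have haA : a ∈ A := ha.1
  have hare : a.re = a₁.re := ha.2
  have hev : ∀ᶠ t in atTop, t ∈ Iv ε A a := by
    have : ∀ᶠ t in atTop, ∀ x ∈ A, x ≠ a → φ ε t x < φ ε t a := by
      rw [eventually_all_finite hA]
      intro x hx
      rcases eq_or_ne x a with rfl | hxa
      · exact Eventually.of_forall fun t hne => absurd rfl hne
      rcases lt_or_eq_of_le ((hmax x hx).trans hare.ge) with hlt | heq
      · filter_upwards [eventually_gt_atTop ((ε * (x.im - a.im)) / (a.re - x.re))] with t htt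
        intro _
        have hpos : 0 < a.re - x.re := by linarith
        have h2 := (div_lt_iff₀ hpos).1 htt
        simp only [φ]
        nlinarith
      · have hx' : x ∈ {x ∈ A | x.re = a₁.re} := ⟨hx, by rw [heq]; exact hare⟩
        have him : ε * x.im < ε * a.im := by
          rcases lt_or_eq_of_le (hmax2 x hx') with h | h
          · exact h
          · exfalso
            apply hxa
            have : x.im = a.im := mul_left_cancel₀ hε h
            exact Complex.ext (by rw [heq, hare]) this
        refine Eventually.of_forall fun t _ => ?_
        simp only [φ]
        rw [heq]
        linarith
    exact this
  obtain ⟨t₀, ht₀⟩ := eventually_atTop.1 hev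
  refine ⟨a, haA, ⟨t₀, ht₀ t₀ le_rfl⟩, ?_⟩
  rw [esup]
  apply sSup_eq_top.2
  intro b hb
  obtain ⟨r, hbr, -⟩ := EReal.lt_iff_exists_real_btwn.1 hb
  refine ⟨((max t₀ r + 1 : ℝ) : EReal), ⟨max t₀ r + 1, ht₀ _ ((le_max_left t₀ r).trans (by linarith)), rfl⟩, ?_⟩
  refine hbr.trans_le ?_
  exact_mod_cast (by linarith [le_max_right t₀ r] : r ≤ max t₀ r + 1)


/-- Main counting lemma for a fixed ε. -/
theorem count_P {S T : Set ℂ} (hS : S.Finite) (hT : T.Finite)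
    (hSne : S.Nonempty) (hTne : T.Nonempty) {ε : ℝ} (hε : ε ≠ 0) :
    {v ∈ S + T | (Iv ε (S + T) v).Nonempty}.ncard + 1 ≤
      {a ∈ S | (Iv ε S a).Nonempty}.ncard + {b ∈ T | (Iv ε T b).Nonempty}.ncard := by
  set X := S + T with hX_def
  have hX : X.Finite := hS.add hT
  set P := {v ∈ X | (Iv ε X v).Nonempty} with hP_def
  set US := {a ∈ S | (Iv ε S a).Nonempty} with hUS_def
  set UT := {b ∈ T | (Iv ε T b).Nonempty} with hUT_def
  set ES := (fun a => esup (Iv ε S a)) '' US with hES_def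
  set ET := (fun b => esup (Iv ε T b)) '' UT with hET_def
  have hUSfin : US.Finite := hS.subset (sep_subset _ _)
  have hUTfin : UT.Finite := hT.subset (sep_subset _ _)
  have hESfin : ES.Finite := hUSfin.image _
  have hETfin : ET.Finite := hUTfin.image _
  -- the injection from P into ES ∪ ET
  have hmaps : ∀ v ∈ P, esup (Iv ε X v) ∈ ES ∪ ET := by
    rintro v ⟨hvX, hvne⟩
    obtain ⟨a, ha, b, hb, hab, heq⟩ := decomp hvX
    rw [heq ε] at hvne ⊢
    have hane : (Iv ε S a).Nonempty := ⟨hvne.choose, hvne.choose_spec.1⟩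
    have hbne : (Iv ε T b).Nonempty := ⟨hvne.choose, hvne.choose_spec.2⟩
    rcases esup_inter (Iv_ordConnected ε S a) (Iv_ordConnected ε T b) hvne with h | h
    · exact Or.inl ⟨a, ⟨ha, hane⟩, h.symm⟩
    · exact Or.inr ⟨b, ⟨hb, hbne⟩, h.symm⟩
  have hinj : InjOn (fun v => esup (Iv ε X v)) P := by
    rintro v ⟨hvX, hvne⟩ w ⟨hwX, hwne⟩ hvw
    by_contra hne
    exact esup_ne (Iv_isOpen hX ε v) (Iv_isOpen hX ε w) (Iv_ordConnected ε X v)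
      (Iv_ordConnected ε X w) hvne hwne
      (fun t ht ht' => Iv_disjoint hvX hwX hne ht ht') hvw
  have h1 : P.ncard ≤ (ES ∪ ET).ncard :=
    ncard_le_ncard_of_injOn _ hmaps hinj (hESfin.union hETfin)
  -- ⊤ belongs to both ES and ET
  obtain ⟨a₀, ha₀, hane₀, htop₀⟩ := exists_esup_top hS hSne hε
  obtain ⟨b₀, hb₀, hbne₀, htop₁⟩ := exists_esup_top hT hTne hε
  have htopES : (⊤ : EReal) ∈ ES := ⟨a₀, ⟨ha₀, hane₀⟩, htop₀⟩
  have htopET : (⊤ : EReal) ∈ ET := ⟨b₀, ⟨hb₀, hbne₀⟩, htop₁⟩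
  have hsub : ES ∪ ET ⊆ (ES \ {⊤}) ∪ ET := by
    intro x hx
    rcases hx with hx | hx
    · rcases eq_or_ne x ⊤ with rfl | hne
      · exact Or.inr htopET
      · exact Or.inl ⟨hx, hne⟩
    · exact Or.inr hx
  have h2 : (ES ∪ ET).ncard ≤ (ES \ {⊤}).ncard + ET.ncard :=
    le_trans (ncard_le_ncard hsub (hESfin.diff.union hETfin)) (ncard_union_le _ _)
  have h3 : (ES \ {⊤}).ncard + 1 = ES.ncard := ncard_diff_singleton_add_one htopES hESfin
  have h4 : ES.ncard ≤ US.ncard := ncard_image_le hUSfin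
  have h5 : ET.ncard ≤ UT.ncard := ncard_image_le hUTfin
  omega


/-- Upper and lower slope-vertex sets overlap only at strict `re`-extremes. -/
theorem count_U {S : Set ℂ} (hS : S.Finite) :
    {a ∈ S | (Iv 1 S a).Nonempty}.ncard + {a ∈ S | (Iv (-1) S a).Nonempty}.ncard ≤
      S.ncard + {a ∈ S | ∀ x ∈ S, x ≠ a → x.re < a.re}.ncard
        + {a ∈ S | ∀ x ∈ S, x ≠ a → a.re < x.re}.ncard := by
  set U1 := {a ∈ S | (Iv 1 S a).Nonempty} with hU1
  set U2 := {a ∈ S | (Iv (-1) S a).Nonempty} with hU2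
  set RM := {a ∈ S | ∀ x ∈ S, x ≠ a → x.re < a.re} with hRM
  set Rm := {a ∈ S | ∀ x ∈ S, x ≠ a → a.re < x.re} with hRm
  have hU1f : U1.Finite := hS.subset (sep_subset _ _)
  have hU2f : U2.Finite := hS.subset (sep_subset _ _)
  have hcap : U1 ∩ U2 ⊆ RM ∪ Rm := by
    rintro a ⟨⟨haS, t, ht⟩, ⟨-, t', ht'⟩⟩
    have key : ∀ x ∈ S, x ≠ a → (t + t') * x.re < (t + t') * a.re := by
      intro x hx hxa
      have h1 := ht x hx hxa
      have h2 := ht' x hx hxa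
      simp only [φ] at h1 h2
      nlinarith
    rcases lt_trichotomy (t + t') 0 with h | h | h
    · exact Or.inr ⟨haS, fun x hx hxa => lt_of_mul_lt_mul_of_nonpos_left (key x hx hxa) h.le⟩
    · refine Or.inl ⟨haS, fun x hx hxa => ?_⟩
      exfalso
      have := key x hx hxa
      rw [h] at this
      simp at this
    · exact Or.inl ⟨haS, fun x hx hxa => lt_of_mul_lt_mul_left (key x hx hxa) h.le⟩
  have hcup : U1 ∪ U2 ⊆ S := union_subset (sep_subset _ _) (sep_subset _ _)
  have e1 : (U1 ∪ U2).ncard + (U1 ∩ U2).ncard = U1.ncard + U2.ncard :=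
    ncard_union_add_ncard_inter _ _ hU1f hU2f
  have e2 : (U1 ∪ U2).ncard ≤ S.ncard := ncard_le_ncard hcup hS
  have e3 : (U1 ∩ U2).ncard ≤ RM.ncard + Rm.ncard :=
    le_trans (ncard_le_ncard hcap ((hS.subset (sep_subset _ _)).union (hS.subset (sep_subset _ _))))
      (ncard_union_le _ _)
  omega

theorem RM_ncard_le_one {S : Set ℂ} (hS : S.Finite) (f : ℂ → ℂ → Prop)
    (hf : ∀ a b, f a b → f b a → False)
    : {a ∈ S | ∀ x ∈ S, x ≠ a → f x a}.ncard ≤ 1 := by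
  rw [ncard_le_one (hS.subset (sep_subset _ _))]
  rintro a ⟨haS, ha⟩ b ⟨hbS, hb⟩
  by_contra hne
  exact hf a b (hb a haS hne) (ha b hbS (Ne.symm hne))

/-- Sum of strict re-maxima is the strict re-maximum of the sum. -/
theorem max_add_max {S T : Set ℂ} {a b : ℂ}
    (ha : a ∈ S) (hamax : ∀ x ∈ S, x ≠ a → x.re < a.re)
    (hb : b ∈ T) (hbmax : ∀ x ∈ T, x ≠ b → x.re < b.re) :
    ∀ x ∈ S + T, x ≠ a + b → x.re < (a + b).re := by
  intro x hx hne
  rw [Set.mem_add] at hx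
  obtain ⟨s, hs, w, hw, rfl⟩ := hx
  have hsa : s.re ≤ a.re := by
    rcases eq_or_ne s a with rfl | h
    · exact le_rfl
    · exact (hamax s hs h).le
  have hwb : w.re ≤ b.re := by
    rcases eq_or_ne w b with rfl | h
    · exact le_rfl
    · exact (hbmax w hw h).le
  have hor : s ≠ a ∨ w ≠ b := by
    by_contra hc
    push_neg at hc
    exact hne (by rw [hc.1, hc.2])
  simp only [Complex.add_re]
  rcases hor with h | h
  · have := hamax s hs h; linarith
  · have := hbmax w hw h; linarith

theorem min_add_min {S T : Set ℂ} {a b : ℂ}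
    (ha : a ∈ S) (hamin : ∀ x ∈ S, x ≠ a → a.re < x.re)
    (hb : b ∈ T) (hbmin : ∀ x ∈ T, x ≠ b → b.re < x.re) :
    ∀ x ∈ S + T, x ≠ a + b → (a + b).re < x.re := by
  intro x hx hne
  rw [Set.mem_add] at hx
  obtain ⟨s, hs, w, hw, rfl⟩ := hx
  have hsa : a.re ≤ s.re := by
    rcases eq_or_ne s a with rfl | h
    · exact le_rfl
    · exact (hamin s hs h).le
  have hwb : b.re ≤ w.re := by
    rcases eq_or_ne w b with rfl | h
    · exact le_rfl
    · exact (hbmin w hw h).le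
  have hor : s ≠ a ∨ w ≠ b := by
    by_contra hc
    push_neg at hc
    exact hne (by rw [hc.1, hc.2])
  simp only [Complex.add_re]
  rcases hor with h | h
  · have := hamin s hs h; linarith
  · have := hbmin w hw h; linarith


theorem exposed_mem {X : Set ℂ} (hX : X.Finite) {v : ℂ} {n₁ n₂ : ℝ}
    (key : ∀ x ∈ X, x ≠ v → n₁ * x.re + n₂ * x.im < n₁ * v.re + n₂ * v.im) :
    (Iv 1 X v).Nonempty ∨ (Iv (-1) X v).Nonempty := by
  by_cases hdeg : ∀ x ∈ X, x = v
  · exact Or.inl ⟨0, fun x hx hxv => absurd (hdeg x hx) hxv⟩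
  push_neg at hdeg
  obtain ⟨x₀, hx₀, hx₀v⟩ := hdeg
  rcases lt_trichotomy n₂ 0 with hn | hn | hn
  · refine Or.inr ⟨n₁ / (-n₂), fun x hx hxv => ?_⟩
    have hne : (-n₂) ≠ 0 := by linarith
    have main : ∀ z : ℂ, (n₁ / (-n₂) * z.re + (-1) * z.im) * (-n₂) = n₁ * z.re + n₂ * z.im := by
      intro z
      have h : n₁ / (-n₂) * (-n₂) = n₁ := div_mul_cancel₀ _ hne
      calc (n₁ / (-n₂) * z.re + (-1) * z.im) * (-n₂)
          = (n₁ / (-n₂) * (-n₂)) * z.re + n₂ * z.im := by ring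
        _ = n₁ * z.re + n₂ * z.im := by rw [h]
    have h2 : (φ (-1) (n₁ / (-n₂)) x) * (-n₂) < (φ (-1) (n₁ / (-n₂)) v) * (-n₂) := by
      simp only [φ]; rw [main, main]; exact key x hx hxv
    exact lt_of_mul_lt_mul_right h2 (by linarith)
  · subst hn
    simp only [zero_mul, add_zero] at key
    have hn₁ : n₁ ≠ 0 := by
      intro h
      have := key x₀ hx₀ hx₀v
      rw [h] at this
      simp at this
    rcases lt_or_gt_of_ne hn₁ with h | h
    · exact Or.inl (Iv_nonempty_of_min hX
        (fun x hx hxv => lt_of_mul_lt_mul_of_nonpos_left (key x hx hxv) h.le) 1)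
    · exact Or.inl (Iv_nonempty_of_max hX
        (fun x hx hxv => lt_of_mul_lt_mul_left (key x hx hxv) h.le) 1)
  · refine Or.inl ⟨n₁ / n₂, fun x hx hxv => ?_⟩
    have hne : n₂ ≠ 0 := by linarith
    have main : ∀ z : ℂ, (n₁ / n₂ * z.re + 1 * z.im) * n₂ = n₁ * z.re + n₂ * z.im := by
      intro z
      have h : n₁ / n₂ * n₂ = n₁ := div_mul_cancel₀ _ hne
      calc (n₁ / n₂ * z.re + 1 * z.im) * n₂
          = (n₁ / n₂ * n₂) * z.re + n₂ * z.im := by ring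
        _ = n₁ * z.re + n₂ * z.im := by rw [h]
    have h2 : (φ 1 (n₁ / n₂) x) * n₂ < (φ 1 (n₁ / n₂) v) * n₂ := by
      simp only [φ]; rw [main, main]; exact key x hx hxv
    exact lt_of_mul_lt_mul_right h2 (by linarith)

theorem cover {S T : Set ℂ} (hS : S.Finite) (hT : T.Finite) :
    Set.extremePoints ℝ (convexHull ℝ S + convexHull ℝ T) ⊆
      {v ∈ S + T | (Iv 1 (S + T) v).Nonempty} ∪ {v ∈ S + T | (Iv (-1) (S + T) v).Nonempty} := by
  rw [← convexHull_add]
  intro v hv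
  have hX : (S + T).Finite := hS.add hT
  have hvX : v ∈ S + T := extremePoints_convexHull_subset hv
  have h2 := ((convex_convexHull ℝ (S + T)).mem_extremePoints_iff_mem_diff_convexHull_diff).1 hv
  have hnot : v ∉ convexHull ℝ ((S + T) \ {v}) := fun hc =>
    h2.2 (convexHull_mono (diff_subset_diff_left (subset_convexHull ℝ _)) hc)
  obtain ⟨f, u, hfu, hfb⟩ := geometric_hahn_banach_point_closed
    (convex_convexHull ℝ _) (hX.diff.isClosed_convexHull (𝕜 := ℝ)) hnot
  have hkey : ∀ x ∈ S + T, x ≠ v →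
      (-(f 1)) * x.re + (-(f Complex.I)) * x.im < (-(f 1)) * v.re + (-(f Complex.I)) * v.im := by
    intro x hx hxv
    have hxC : x ∈ convexHull ℝ ((S + T) \ {v}) := subset_convexHull ℝ _ ⟨hx, hxv⟩
    have hlt : f v < f x := hfu.trans (hfb x hxC)
    have hrep : ∀ z : ℂ, f z = z.re * f 1 + z.im * f Complex.I := by
      intro z
      have hz : z = z.re • (1 : ℂ) + z.im • Complex.I := by
        apply Complex.ext <;> simp
      conv_lhs => rw [hz]
      rw [map_add, map_smul, map_smul, smul_eq_mul, smul_eq_mul]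
    rw [hrep x, hrep v] at hlt
    linarith
  rcases exposed_mem hX hkey with h | h
  · exact Or.inl ⟨hvX, h⟩
  · exact Or.inr ⟨hvX, h⟩

end Stmt11Aux

open Stmt11Aux

theorem stmt_11 (S T : Set ℂ) (hSne : S.Nonempty) (hTne : T.Nonempty)
    (hSfin : S.Finite) (hTfin : T.Finite) :
    (Set.extremePoints ℝ (convexHull ℝ S + convexHull ℝ T)).ncard ≤
      S.ncard + T.ncard := by
  classical
  by_cases hsing : S.ncard = 1 ∧ T.ncard = 1
  · obtain ⟨hS1, hT1⟩ := hsing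
    obtain ⟨a, rfl⟩ := ncard_eq_one.1 hS1
    obtain ⟨b, rfl⟩ := ncard_eq_one.1 hT1
    rw [convexHull_singleton, convexHull_singleton, Set.singleton_add_singleton]
    have h1 : (Set.extremePoints ℝ {a + b}).ncard ≤ ({a + b} : Set ℂ).ncard :=
      ncard_le_ncard extremePoints_subset (finite_singleton _)
    simp only [ncard_singleton] at h1 ⊢
    omega
  · have hXfin : (S + T).Finite := hSfin.add hTfin
    have hP1fin : {v ∈ S + T | (Iv 1 (S + T) v).Nonempty}.Finite := hXfin.subset (sep_subset _ _)
    have hP2fin : {v ∈ S + T | (Iv (-1) (S + T) v).Nonempty}.Finite := hXfin.subset (sep_subset _ _)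
    have hext : (Set.extremePoints ℝ (convexHull ℝ S + convexHull ℝ T)).ncard ≤
        ({v ∈ S + T | (Iv 1 (S + T) v).Nonempty} ∪
          {v ∈ S + T | (Iv (-1) (S + T) v).Nonempty}).ncard :=
      ncard_le_ncard (cover hSfin hTfin) (hP1fin.union hP2fin)
    have hpu : ({v ∈ S + T | (Iv 1 (S + T) v).Nonempty} ∪
          {v ∈ S + T | (Iv (-1) (S + T) v).Nonempty}).ncard +
        ({v ∈ S + T | (Iv 1 (S + T) v).Nonempty} ∩
          {v ∈ S + T | (Iv (-1) (S + T) v).Nonempty}).ncard =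
        {v ∈ S + T | (Iv 1 (S + T) v).Nonempty}.ncard +
        {v ∈ S + T | (Iv (-1) (S + T) v).Nonempty}.ncard :=
      ncard_union_add_ncard_inter _ _ hP1fin hP2fin
    have hc1 : {v ∈ S + T | (Iv 1 (S + T) v).Nonempty}.ncard + 1 ≤
        {a ∈ S | (Iv 1 S a).Nonempty}.ncard + {b ∈ T | (Iv 1 T b).Nonempty}.ncard :=
      count_P hSfin hTfin hSne hTne one_ne_zero
    have hc2 : {v ∈ S + T | (Iv (-1) (S + T) v).Nonempty}.ncard + 1 ≤
        {a ∈ S | (Iv (-1) S a).Nonempty}.ncard + {b ∈ T | (Iv (-1) T b).Nonempty}.ncard :=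
      count_P hSfin hTfin hSne hTne (by norm_num)
    have hAS := count_U hSfin
    have hAT := count_U hTfin
    have hrS : {a ∈ S | ∀ x ∈ S, x ≠ a → x.re < a.re}.ncard ≤ 1 :=
      RM_ncard_le_one hSfin _ (fun a b h1 h2 => lt_asymm h1 h2)
    have hlS : {a ∈ S | ∀ x ∈ S, x ≠ a → a.re < x.re}.ncard ≤ 1 :=
      RM_ncard_le_one hSfin _ (fun a b h1 h2 => lt_asymm h2 h1)
    have hrT : {a ∈ T | ∀ x ∈ T, x ≠ a → x.re < a.re}.ncard ≤ 1 :=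
      RM_ncard_le_one hTfin _ (fun a b h1 h2 => lt_asymm h1 h2)
    have hlT : {a ∈ T | ∀ x ∈ T, x ≠ a → a.re < x.re}.ncard ≤ 1 :=
      RM_ncard_le_one hTfin _ (fun a b h1 h2 => lt_asymm h2 h1)
    -- lower bounds on the intersection
    have key1 : {a ∈ S | ∀ x ∈ S, x ≠ a → x.re < a.re}.Nonempty →
        {a ∈ T | ∀ x ∈ T, x ≠ a → x.re < a.re}.Nonempty →
        ∃ v ∈ ({v ∈ S + T | (Iv 1 (S + T) v).Nonempty} ∩
          {v ∈ S + T | (Iv (-1) (S + T) v).Nonempty}),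
          ∀ x ∈ S + T, x ≠ v → x.re < v.re := by
      rintro ⟨ar, harS, harmax⟩ ⟨br, hbrT, hbrmax⟩
      have hmax := max_add_max harS harmax hbrT hbrmax
      exact ⟨ar + br, ⟨⟨add_mem_add harS hbrT, Iv_nonempty_of_max hXfin hmax 1⟩,
        ⟨add_mem_add harS hbrT, Iv_nonempty_of_max hXfin hmax (-1)⟩⟩, hmax⟩
    have key2 : {a ∈ S | ∀ x ∈ S, x ≠ a → a.re < x.re}.Nonempty →
        {a ∈ T | ∀ x ∈ T, x ≠ a → a.re < x.re}.Nonempty →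
        ∃ v ∈ ({v ∈ S + T | (Iv 1 (S + T) v).Nonempty} ∩
          {v ∈ S + T | (Iv (-1) (S + T) v).Nonempty}),
          ∀ x ∈ S + T, x ≠ v → v.re < x.re := by
      rintro ⟨ar, harS, harmin⟩ ⟨br, hbrT, hbrmin⟩
      have hmin := min_add_min harS harmin hbrT hbrmin
      exact ⟨ar + br, ⟨⟨add_mem_add harS hbrT, Iv_nonempty_of_min hXfin hmin 1⟩,
        ⟨add_mem_add harS hbrT, Iv_nonempty_of_min hXfin hmin (-1)⟩⟩, hmin⟩
    have hIfin : ({v ∈ S + T | (Iv 1 (S + T) v).Nonempty} ∩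
        {v ∈ S + T | (Iv (-1) (S + T) v).Nonempty}).Finite := hP1fin.inter_of_left _
    by_cases hR : {a ∈ S | ∀ x ∈ S, x ≠ a → x.re < a.re}.Nonempty ∧
        {a ∈ T | ∀ x ∈ T, x ≠ a → x.re < a.re}.Nonempty
    · by_cases hL : {a ∈ S | ∀ x ∈ S, x ≠ a → a.re < x.re}.Nonempty ∧
          {a ∈ T | ∀ x ∈ T, x ≠ a → a.re < x.re}.Nonempty
      · -- both: intersection has ≥ 2 elements
        obtain ⟨vr, hvr, hvrmax⟩ := key1 hR.1 hR.2
        obtain ⟨vl, hvl, hvlmin⟩ := key2 hL.1 hL.2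
        have hne : vr ≠ vl := by
          intro h
          subst h
          -- then S + T = {vr}, so S and T are singletons
          have hXsub : ∀ x ∈ S + T, x = vr := by
            intro x hx
            by_contra hxne
            have h1 := hvrmax x hx hxne
            have h2 := hvlmin x hx hxne
            linarith
          obtain ⟨a₀, ha₀⟩ := hSne
          obtain ⟨b₀, hb₀⟩ := hTne
          apply hsing
          constructor
          · have : S = {vr - b₀} := by
              apply Subset.antisymm
              · intro a ha
                have := hXsub (a + b₀) (add_mem_add ha hb₀)
                simp only [mem_singleton_iff]
                linear_combination this
              · intro a ha
                rw [mem_singleton_iff] at ha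
                have := hXsub (a₀ + b₀) (add_mem_add ha₀ hb₀)
                have h2 : a = a₀ := by rw [ha]; linear_combination -this
                rw [h2]; exact ha₀
            rw [this, ncard_singleton]
          · have : T = {vr - a₀} := by
              apply Subset.antisymm
              · intro b hb
                have := hXsub (a₀ + b) (add_mem_add ha₀ hb)
                simp only [mem_singleton_iff]
                linear_combination this
              · intro b hb
                rw [mem_singleton_iff] at hb
                have := hXsub (a₀ + b₀) (add_mem_add ha₀ hb₀)
                have h2 : b = b₀ := by rw [hb]; linear_combination -this
                rw [h2]; exact hb₀
            rw [this, ncard_singleton]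
        have hpi : 1 < ({v ∈ S + T | (Iv 1 (S + T) v).Nonempty} ∩
            {v ∈ S + T | (Iv (-1) (S + T) v).Nonempty}).ncard :=
          (one_lt_ncard hIfin).2 ⟨vr, hvr, vl, hvl, hne⟩
        omega
      · -- right only
        obtain ⟨vr, hvr, -⟩ := key1 hR.1 hR.2
        have hpi : 0 < ({v ∈ S + T | (Iv 1 (S + T) v).Nonempty} ∩
            {v ∈ S + T | (Iv (-1) (S + T) v).Nonempty}).ncard :=
          (ncard_pos hIfin).2 ⟨vr, hvr⟩
        have h0 : {a ∈ S | ∀ x ∈ S, x ≠ a → a.re < x.re}.ncard = 0 ∨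
            {a ∈ T | ∀ x ∈ T, x ≠ a → a.re < x.re}.ncard = 0 := by
          rcases not_and_or.1 hL with h | h
          · left; rw [not_nonempty_iff_eq_empty.1 h]; exact ncard_empty _
          · right; rw [not_nonempty_iff_eq_empty.1 h]; exact ncard_empty _
        rcases h0 with h0 | h0 <;> omega
    · by_cases hL : {a ∈ S | ∀ x ∈ S, x ≠ a → a.re < x.re}.Nonempty ∧
          {a ∈ T | ∀ x ∈ T, x ≠ a → a.re < x.re}.Nonempty
      · -- left only
        obtain ⟨vl, hvl, -⟩ := key2 hL.1 hL.2
        have hpi : 0 < ({v ∈ S + T | (Iv 1 (S + T) v).Nonempty} ∩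
            {v ∈ S + T | (Iv (-1) (S + T) v).Nonempty}).ncard :=
          (ncard_pos hIfin).2 ⟨vl, hvl⟩
        have h0 : {a ∈ S | ∀ x ∈ S, x ≠ a → x.re < a.re}.ncard = 0 ∨
            {a ∈ T | ∀ x ∈ T, x ≠ a → x.re < a.re}.ncard = 0 := by
          rcases not_and_or.1 hR with h | h
          · left; rw [not_nonempty_iff_eq_empty.1 h]; exact ncard_empty _
          · right; rw [not_nonempty_iff_eq_empty.1 h]; exact ncard_empty _
        rcases h0 with h0 | h0 <;> omega
      · -- neither
        have h0 : {a ∈ S | ∀ x ∈ S, x ≠ a → x.re < a.re}.ncard = 0 ∨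
            {a ∈ T | ∀ x ∈ T, x ≠ a → x.re < a.re}.ncard = 0 := by
          rcases not_and_or.1 hR with h | h
          · left; rw [not_nonempty_iff_eq_empty.1 h]; exact ncard_empty _
          · right; rw [not_nonempty_iff_eq_empty.1 h]; exact ncard_empty _
        have h1 : {a ∈ S | ∀ x ∈ S, x ≠ a → a.re < x.re}.ncard = 0 ∨
            {a ∈ T | ∀ x ∈ T, x ≠ a → a.re < x.re}.ncard = 0 := by
          rcases not_and_or.1 hL with h | h
          · left; rw [not_nonempty_iff_eq_empty.1 h]; exact ncard_empty _
          · right; rw [not_nonempty_iff_eq_empty.1 h]; exact ncard_empty _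
        rcases h0 with h0 | h0 <;> rcases h1 with h1 | h1 <;> omega
end
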